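/- Let R be a discrete valuation domain with prime element p, β an ordinal, and P_β the Walker module. For every ordinal α ≤ β one has p^αP_β = X_α, where X_α is the submodule of P_β generated by all generators ββ₁β₂…β_nα ending in α. In particular, p^βP_β = ⟨β⟩ ≅ R/(p) and p^{β+1}P_β = 0, so P_β is a reduced torsion module of length β + 1. -/

import Mathlib

universe u v w

open Ordinal

noncomputable def pPow (R : Type u) [CommRing R] (p : R) (G : Type v) [AddCommGroup G]
    [Module R G] (σ : Ordinal.{w}) : Submodule R G :=
  Ordinal.limitRecOn σ ⊤ (fun _ N => N.map (LinearMap.lsmul R G p))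
    (fun o _ ih => ⨅ ρ : Set.Iio o, ih ρ.1 ρ.2)

/-- Generators of the Walker module `P β`: strictly decreasing finite sequences of ordinals
starting with `β` (encoded by their tails). -/
def WalkerGen (β : Ordinal.{w}) : Type (w + 1) :=
  {l : List Ordinal.{w} // (β :: l).Chain' (· > ·)}

/-- The defining relation of the Walker module attached to a generator `g`:
`p • g - g'` where `g'` is obtained by deleting the last entry of `g`
(interpreted as `0` when `g` is the length-one sequence `β`). -/
noncomputable def walkerRel (R : Type u) [CommRing R] (p : R) (β : Ordinal.{w})
    (g : WalkerGen β) : WalkerGen β →₀ R :=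
  p • Finsupp.single g 1 -
    if _h : g.1 = [] then 0
    else Finsupp.single
      ⟨g.1.dropLast, g.2.sublist ((g.1.dropLast_sublist).cons₂ β)⟩ 1

/-- The Walker module `P β` over a discrete valuation domain with prime `p`. -/
noncomputable abbrev WalkerModule (R : Type u) [CommRing R] (p : R) (β : Ordinal.{w}) :=
  (WalkerGen β →₀ R) ⧸ Submodule.span R (Set.range (walkerRel R p β))

/-- The image in `P β` of a generator. -/
noncomputable def walkerMk (R : Type u) [CommRing R] (p : R) (β : Ordinal.{w})
    (g : WalkerGen β) : WalkerModule R p β :=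
  Submodule.Quotient.mk (Finsupp.single g 1)

/-- The distinguished generator `β` of the Walker module `P β`. -/
noncomputable def walkerTop (R : Type u) [CommRing R] (p : R) (β : Ordinal.{w}) :
    WalkerModule R p β :=
  walkerMk R p β ⟨[], List.isChain_singleton β⟩

/-- The submodule `X α` of `P β` generated by all generators ending in `α`. -/
noncomputable def walkerX (R : Type u) [CommRing R] (p : R) (β α : Ordinal.{w}) :
    Submodule R (WalkerModule R p β) :=
  Submodule.span R
    {x | ∃ g : WalkerGen β, (β :: g.1).getLast (List.cons_ne_nil β g.1) = α ∧
      x = walkerMk R p β g}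

set_option linter.unusedSectionVars false
namespace WP
variable {β : Ordinal.{w}}

instance : IsTrans Ordinal.{w} (· > ·) := ⟨fun _ _ _ h h' => h'.trans h⟩

def lastVal (β : Ordinal.{w}) (g : WalkerGen β) : Ordinal.{w} :=
  (β :: g.1).getLast (List.cons_ne_nil β g.1)

def dropG (β : Ordinal.{w}) (g : WalkerGen β) : WalkerGen β :=
  ⟨g.1.dropLast, g.2.sublist ((g.1.dropLast_sublist).cons₂ β)⟩

lemma lastVal_nil : lastVal β ⟨[], List.isChain_singleton β⟩ = β := rfl

lemma lastVal_eq (g : WalkerGen β) (h : g.1 ≠ []) : lastVal β g = g.1.getLast h :=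
  List.getLast_cons h

lemma lastVal_le (g : WalkerGen β) : lastVal β g ≤ β := by
  rcases eq_or_ne g.1 [] with h | h
  · rcases g with ⟨l, hl⟩; subst h; exact le_rfl
  · rw [lastVal_eq g h]
    have hp := (List.isChain_iff_pairwise.mp g.2)
    have := (List.pairwise_cons.mp hp).1
    exact (this _ (List.getLast_mem h)).le

lemma lastVal_lt (g : WalkerGen β) (h : g.1 ≠ []) : lastVal β g < β := by
  rw [lastVal_eq g h]
  have hp := (List.isChain_iff_pairwise.mp g.2)
  exact (List.pairwise_cons.mp hp).1 _ (List.getLast_mem h)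

lemma eq_nil_of_lastVal_eq (g : WalkerGen β) (h : lastVal β g = β) : g.1 = [] := by
  by_contra hne
  exact absurd h (ne_of_lt (lastVal_lt g hne))

lemma cons_decomp (g : WalkerGen β) (h : g.1 ≠ []) :
    β :: g.1 = (β :: g.1.dropLast) ++ [g.1.getLast h] := by
  conv_lhs => rw [← List.dropLast_append_getLast h]
  simp

lemma lastVal_dropG_gt (g : WalkerGen β) (h : g.1 ≠ []) :
    lastVal β g < lastVal β (dropG β g) := by
  have hc : List.IsChain (· > ·) (β :: g.1) := g.2
  rw [cons_decomp g h, List.isChain_append] at hc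
  obtain ⟨h1, -, h3⟩ := hc
  have := h3 _ (List.getLast?_eq_getLast (List.cons_ne_nil _ _)) _ rfl
  rw [lastVal_eq g h]
  exact this

def extG (g : WalkerGen β) (α : Ordinal.{w}) (h : α < lastVal β g) : WalkerGen β :=
  ⟨g.1 ++ [α], by
    have : β :: (g.1 ++ [α]) = (β :: g.1) ++ [α] := by simp
    show List.IsChain _ _; rw [this, List.isChain_append]
    refine ⟨g.2, List.isChain_singleton α, ?_⟩
    intro x hx y hy
    rw [List.getLast?_eq_getLast (List.cons_ne_nil _ _), Option.mem_def, Option.some_inj] at hx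
    simp only [List.head?_cons, Option.mem_def, Option.some_inj] at hy
    subst hx; subst hy; exact h⟩

lemma extG_ne_nil (g : WalkerGen β) (α) (h) : (extG g α h).1 ≠ [] := by
  simp [extG]

lemma lastVal_extG (g : WalkerGen β) (α) (h) : lastVal β (extG g α h) = α := by
  rw [lastVal_eq _ (extG_ne_nil g α h)]
  exact List.getLast_concat

lemma dropG_extG (g : WalkerGen β) (α) (h) : dropG β (extG g α h) = g := by
  apply Subtype.ext
  simp [dropG, extG]

lemma length_dropG (g : WalkerGen β) (h : g.1 ≠ []) :
    (dropG β g).1.length + 1 = g.1.length := by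
  have hz : g.1.length ≠ 0 := fun e => h (List.eq_nil_of_length_eq_zero e)
  simp only [dropG, List.length_dropLast]
  omega

lemma dropG_ne (g : WalkerGen β) (h : g.1 ≠ []) : dropG β g ≠ g := by
  intro he
  have := congrArg (fun x => x.1.length) he
  simp only [dropG, List.length_dropLast] at this
  have : g.1.length ≠ 0 := by simpa using h
  omega

end WP


section Mod
variable (R : Type u) [CommRing R] [IsDomain R] [IsDiscreteValuationRing R]
variable (p : R) (β : Ordinal.{w})

noncomputable abbrev sp : Submodule R (WalkerGen β →₀ R) :=
  Submodule.span R (Set.range (walkerRel R p β))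

lemma rel_mem (g : WalkerGen β) : walkerRel R p β g ∈ sp R p β :=
  Submodule.subset_span ⟨g, rfl⟩

lemma rel_eq (g : WalkerGen β) (h : g.1 ≠ []) :
    walkerRel R p β g = p • Finsupp.single g 1 - Finsupp.single (WP.dropG β g) 1 := by
  rw [walkerRel, dif_neg h]; rfl

lemma rel_eq_nil (g : WalkerGen β) (h : g.1 = []) :
    walkerRel R p β g = p • Finsupp.single g 1 := by
  rw [walkerRel, dif_pos h]; simp

lemma mkQ_single (g : WalkerGen β) : (sp R p β).mkQ (Finsupp.single g 1) = walkerMk R p β g := rfl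

lemma smul_mk (g : WalkerGen β) (h : g.1 ≠ []) :
    p • walkerMk R p β g = walkerMk R p β (WP.dropG β g) := by
  rw [walkerMk, walkerMk, ← Submodule.Quotient.mk_smul, Submodule.Quotient.eq]
  rw [← rel_eq R p β g h]; exact rel_mem R p β g

lemma smul_top : p • walkerTop R p β = 0 := by
  unfold walkerTop walkerMk; rw [← Submodule.Quotient.mk_smul, Submodule.Quotient.mk_eq_zero]
  rw [← rel_eq_nil R p β ⟨[], List.isChain_singleton β⟩ rfl]
  exact rel_mem R p β _

lemma smul_extG (g : WalkerGen β) (α : Ordinal.{w}) (h : α < WP.lastVal β g) :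
    p • walkerMk R p β (WP.extG g α h) = walkerMk R p β g := by
  rw [smul_mk R p β _ (WP.extG_ne_nil g α h), WP.dropG_extG]

lemma mem_X (α : Ordinal.{w}) (g : WalkerGen β) (h : α ≤ WP.lastVal β g) :
    walkerMk R p β g ∈ walkerX R p β α := by
  rcases h.lt_or_eq with h | h
  · rw [← smul_extG R p β g α h]
    refine Submodule.smul_mem _ p (Submodule.subset_span ?_)
    exact ⟨WP.extG g α h, WP.lastVal_extG g α h, rfl⟩
  · apply Submodule.subset_span
    exact ⟨g, h.symm, rfl⟩

def Sset (α : Ordinal.{w}) : Set (WalkerGen β) := {g | α ≤ WP.lastVal β g}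

lemma X_eq_map (α : Ordinal.{w}) : walkerX R p β α
    = Submodule.map (sp R p β).mkQ (Finsupp.supported R R (Sset β α)) := by
  apply le_antisymm
  · rw [walkerX, Submodule.span_le]
    rintro x ⟨g, hg, rfl⟩
    refine ⟨Finsupp.single g 1, Finsupp.single_mem_supported R 1 ?_, rfl⟩
    exact le_of_eq hg.symm
  · rw [Finsupp.supported_eq_span_single, Submodule.map_span, Submodule.span_le]
    rintro x ⟨y, ⟨g, hg, rfl⟩, rfl⟩
    exact mem_X R p β α g hg

end Mod

section Core
variable (R : Type u) [CommRing R] [IsDomain R] [IsDiscreteValuationRing R]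
variable (p : R) (β : Ordinal.{w})
set_option linter.unusedSectionVars false

lemma rel_apply (g h : WalkerGen β) [Decidable (g = h)]
    [Decidable (g.1 ≠ [] ∧ WP.dropG β g = h)] :
    walkerRel R p β g h = (if g = h then p else 0)
      - (if g.1 ≠ [] ∧ WP.dropG β g = h then 1 else 0) := by
  classical
  rcases eq_or_ne g.1 [] with hg | hg
  · have hc : ¬(g.1 ≠ [] ∧ WP.dropG β g = h) := fun hc => hc.1 hg
    rw [rel_eq_nil R p β g hg, if_neg hc, _root_.sub_zero, Finsupp.smul_apply,
      Finsupp.single_apply, _root_.smul_eq_mul, mul_ite, mul_one, mul_zero]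
  · rw [rel_eq R p β g hg, Finsupp.sub_apply, Finsupp.smul_apply, Finsupp.single_apply,
      Finsupp.single_apply, _root_.smul_eq_mul, mul_ite, mul_one, mul_zero]
    congr 1
    simp [hg]

lemma core (hp : p ≠ 0) (S : Set (WalkerGen β))
    (hS : ∀ g : WalkerGen β, g.1 ≠ [] → WP.dropG β g ∈ S → g ∈ S)
    (a z : WalkerGen β →₀ R) (hz : ∀ h ∈ S, z h = 0)
    (hred : ∀ h ∈ S, (z + Finsupp.linearCombination R (walkerRel R p β) a) h = 0
        ∨ ¬ p ∣ (z + Finsupp.linearCombination R (walkerRel R p β) a) h) :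
    ∀ h ∈ S, a h = 0 ∧ (z + Finsupp.linearCombination R (walkerRel R p β) a) h = 0 := by
  classical
  set f := z + Finsupp.linearCombination R (walkerRel R p β) a with hf
  have hfa : ∀ h, f h = z h + ∑ g ∈ a.support, a g * walkerRel R p β g h := by
    intro h
    rw [hf, Finsupp.add_apply, Finsupp.linearCombination_apply, Finsupp.sum,
      Finsupp.finset_sum_apply]
    simp [Finsupp.smul_apply, _root_.smul_eq_mul]
  have ha : ∀ h ∈ S, a h = 0 := by
    by_contra hcon
    push_neg at hcon
    set t := a.support.filter (fun g => g ∈ S) with ht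
    have htne : t.Nonempty := by
      obtain ⟨h0, hS0, hne⟩ := hcon
      exact ⟨h0, Finset.mem_filter.mpr ⟨Finsupp.mem_support_iff.mpr hne, hS0⟩⟩
    obtain ⟨h0, h0t, hmax⟩ := t.exists_max_image (fun g => g.1.length) htne
    have h0S : h0 ∈ S := (Finset.mem_filter.mp h0t).2
    have h0supp : h0 ∈ a.support := (Finset.mem_filter.mp h0t).1
    have hsum : ∑ g ∈ a.support, a g * walkerRel R p β g h0 = a h0 * p := by
      rw [Finset.sum_eq_single h0]
      · rw [rel_apply]
        have hc : ¬ (h0.1 ≠ [] ∧ WP.dropG β h0 = h0) := by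
          rintro ⟨hne, he⟩; exact WP.dropG_ne h0 hne he
        rw [if_pos rfl, if_neg hc, _root_.sub_zero]
      · intro g hgs hgne
        rw [rel_apply]
        have hc : ¬ (g.1 ≠ [] ∧ WP.dropG β g = h0) := by
          rintro ⟨hgnil, hdrop⟩
          have hgS : g ∈ S := hS g hgnil (hdrop ▸ h0S)
          have hgt : g ∈ t := Finset.mem_filter.mpr ⟨hgs, hgS⟩
          have hlen := hmax g hgt
          have hld := WP.length_dropG g hgnil
          rw [hdrop] at hld
          omega
        rw [if_neg hgne, if_neg hc, _root_.sub_zero, mul_zero]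
      · intro habs; exact absurd h0supp habs
    have hfh : f h0 = a h0 * p := by rw [hfa, hz h0 h0S, zero_add, hsum]
    have hdvd : p ∣ f h0 := ⟨a h0, by rw [hfh, mul_comm]⟩
    have hzero : f h0 = 0 := (hred h0 h0S).resolve_right (fun hn => hn hdvd)
    rw [hfh] at hzero
    have : a h0 = 0 := by
      rcases mul_eq_zero.mp hzero with h | h
      · exact h
      · exact absurd h hp
    exact Finsupp.mem_support_iff.mp h0supp this
  intro h hS0
  refine ⟨ha h hS0, ?_⟩
  rw [hfa, hz h hS0, zero_add]
  apply Finset.sum_eq_zero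
  intro g hg
  rcases eq_or_ne g h with rfl | hne
  · rw [Finsupp.mem_support_iff] at hg; exact absurd (ha g hS0) hg
  · have hc : ¬ (g.1 ≠ [] ∧ WP.dropG β g = h) := by
      rintro ⟨hgnil, hdrop⟩
      have hgS : g ∈ S := hS g hgnil (hdrop ▸ hS0)
      rw [Finsupp.mem_support_iff] at hg
      exact hg (ha g hgS)
    rw [rel_apply, if_neg hne, if_neg hc, _root_.sub_zero, mul_zero]

end Core

section Red
variable (R : Type u) [CommRing R] [IsDomain R] [IsDiscreteValuationRing R]
variable (p : R) (β : Ordinal.{w})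
set_option linter.unusedSectionVars false
set_option maxHeartbeats 1000000

noncomputable def mu (f : WalkerGen β →₀ R) : ℕ := ∑ g ∈ f.support, (g.1.length + 1)

lemma exists_red (f : WalkerGen β →₀ R) :
    ∃ f' : WalkerGen β →₀ R, (∀ g ∈ f'.support, ¬ p ∣ f' g) ∧ f - f' ∈ sp R p β := by
  classical
  suffices H : ∀ n : ℕ, ∀ f : WalkerGen β →₀ R, mu R β f ≤ n →
      ∃ f' : WalkerGen β →₀ R, (∀ g ∈ f'.support, ¬ p ∣ f' g) ∧ f - f' ∈ sp R p β from
    H (mu R β f) f le_rfl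
  intro n
  induction n using Nat.strong_induction_on with
  | _ n ih =>
    intro f hf
    by_cases hr : ∀ g ∈ f.support, ¬ p ∣ f g
    · exact ⟨f, hr, by simp⟩
    · push_neg at hr
      obtain ⟨g, hgs, hdvd⟩ := hr
      obtain ⟨c, hc⟩ := hdvd
      have hmf : (g.1.length + 1) + ∑ x ∈ f.support.erase g, (x.1.length + 1) = mu R β f := by
        exact Finset.add_sum_erase f.support (fun x => (x.1.length + 1)) hgs
      by_cases hgnil : g.1 = []
      · have key : f - f.erase g ∈ sp R p β := by
          have he : f - f.erase g = c • walkerRel R p β g := by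
            rw [rel_eq_nil R p β g hgnil]
            ext h
            rcases eq_or_ne h g with rfl | hne
            · simp [Finsupp.erase_same, Finsupp.single_apply, hc, mul_comm]
            · simp [Finsupp.erase_ne hne, Finsupp.single_apply, Ne.symm hne]
          rw [he]; exact Submodule.smul_mem _ _ (rel_mem R p β g)
        have hmu : mu R β (f.erase g) < mu R β f := by
          have : mu R β (f.erase g) = ∑ x ∈ f.support.erase g, (x.1.length + 1) := by
            rw [mu, Finsupp.support_erase]
          omega
        obtain ⟨f', h1, h2⟩ := ih (mu R β (f.erase g)) (lt_of_lt_of_le hmu hf) (f.erase g) le_rfl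
        exact ⟨f', h1, by
          have := Submodule.add_mem _ key h2
          rwa [sub_add_sub_cancel] at this⟩
      · set g' := WP.dropG β g with hg'
        have hgg' : g' ≠ g := WP.dropG_ne g hgnil
        set f₁ : WalkerGen β →₀ R := f.erase g + Finsupp.single g' c with hf₁
        have key : f - f₁ ∈ sp R p β := by
          have he : f - f₁ = c • walkerRel R p β g := by
            rw [rel_eq R p β g hgnil]
            ext h
            rcases eq_or_ne h g with rfl | hne
            · simp [hf₁, Finsupp.erase_same, Finsupp.single_apply, hc, ← hg', hgg', mul_comm]
            · rcases eq_or_ne h g' with rfl | hne'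
              · simp [hf₁, Finsupp.erase_ne hne, Finsupp.single_apply, ← hg', Ne.symm hne]
              · simp [hf₁, Finsupp.erase_ne hne, Finsupp.single_apply, ← hg', Ne.symm hne, Ne.symm hne']
          rw [he]; exact Submodule.smul_mem _ _ (rel_mem R p β g)
        have hsub : f₁.support ⊆ insert g' (f.support.erase g) := by
          intro x hx
          have hx' := Finsupp.support_add hx
          rw [Finset.mem_union, Finsupp.support_erase] at hx'
          rcases hx' with hx' | hx'
          · exact Finset.mem_insert_of_mem hx'
          · have := Finsupp.support_single_subset hx'
            rw [Finset.mem_singleton] at this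
            exact this ▸ Finset.mem_insert_self _ _
        have hlen : g'.1.length + 1 = g.1.length := WP.length_dropG g hgnil
        have hmu : mu R β f₁ < mu R β f := by
          have h1 : mu R β f₁ ≤ ∑ x ∈ insert g' (f.support.erase g), (x.1.length + 1) :=
            Finset.sum_le_sum_of_subset hsub
          by_cases hg'mem : g' ∈ f.support.erase g
          · rw [Finset.insert_eq_self.mpr hg'mem] at h1
            omega
          · rw [Finset.sum_insert hg'mem] at h1
            omega
        obtain ⟨f', h1, h2⟩ := ih (mu R β f₁) (lt_of_lt_of_le hmu hf) f₁ le_rfl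
        exact ⟨f', h1, by
          have := Submodule.add_mem _ key h2
          rwa [sub_add_sub_cancel] at this⟩

lemma reduced_mem_X (hp0 : p ≠ 0) (α : Ordinal.{w}) (f : WalkerGen β →₀ R)
    (hred : ∀ g ∈ f.support, ¬ p ∣ f g)
    (hmem : (Submodule.Quotient.mk f : WalkerModule R p β) ∈ walkerX R p β α) :
    ∀ g ∈ f.support, α ≤ WP.lastVal β g := by
  classical
  rw [X_eq_map] at hmem
  obtain ⟨z, hz, hzf⟩ := hmem
  replace hz : ↑z.support ⊆ Sset β α := (Finsupp.mem_supported R z).mp hz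
  have hsp : f - z ∈ sp R p β := by
    rw [← neg_sub, ]
    apply Submodule.neg_mem
    rw [← Submodule.Quotient.eq]
    exact hzf
  rw [show sp R p β = LinearMap.range (Finsupp.linearCombination R (walkerRel R p β)) from
    (Finsupp.range_linearCombination R).symm] at hsp
  obtain ⟨a, ha⟩ := hsp
  have hfz : f = z + Finsupp.linearCombination R (walkerRel R p β) a := by
    rw [ha]; abel
  have hcore := core R p β hp0 {g | WP.lastVal β g < α}
    (fun g hgnil hd => lt_trans (WP.lastVal_dropG_gt g hgnil) hd)
    a z
    (fun h hh => by
      rw [← Finsupp.notMem_support_iff]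
      intro hmem'
      have hle : α ≤ WP.lastVal β h := hz hmem'
      exact absurd hle (not_le.mpr hh))
    (fun h hh => by
      rw [← hfz]
      by_cases hsupp : h ∈ f.support
      · exact Or.inr (hred h hsupp)
      · exact Or.inl (Finsupp.notMem_support_iff.mp hsupp))
  intro g hg
  by_contra hlt
  rw [not_le] at hlt
  have := (hcore g hlt).2
  rw [← hfz] at this
  exact Finsupp.mem_support_iff.mp hg this

end Red

section Main
variable (R : Type u) [CommRing R] [IsDomain R] [IsDiscreteValuationRing R]
variable (p : R) (β : Ordinal.{w})
set_option linter.unusedSectionVars false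
set_option maxHeartbeats 1000000

lemma pPow_zero (G : Type v) [AddCommGroup G] [Module R G] :
    pPow R p G (0 : Ordinal.{w}) = ⊤ := by
  rw [pPow]; exact Ordinal.limitRecOn_zero _ _ _

lemma pPow_succ (G : Type v) [AddCommGroup G] [Module R G] (o : Ordinal.{w}) :
    pPow R p G (Order.succ o) = (pPow R p G o).map (LinearMap.lsmul R G p) := by
  rw [pPow, Ordinal.limitRecOn_succ]; rfl

lemma pPow_limit (G : Type v) [AddCommGroup G] [Module R G] (o : Ordinal.{w})
    (h : Order.IsSuccLimit o) : pPow R p G o = ⨅ ρ : Set.Iio o, pPow R p G ρ.1 := by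
  rw [pPow, Ordinal.limitRecOn_limit _ _ _ _ h]; rfl

lemma part1 (hp0 : p ≠ 0) : ∀ α ≤ β, pPow R p (WalkerModule R p β) α = walkerX R p β α := by
  intro α
  induction α using Ordinal.limitRecOn with
  | zero =>
    intro _
    rw [pPow_zero, X_eq_map]
    have huniv : Sset β (0 : Ordinal.{w}) = Set.univ :=
      Set.eq_univ_of_forall (fun g => show (0 : Ordinal.{w}) ≤ _ from zero_le)
    rw [huniv, Finsupp.supported_univ, Submodule.map_top, Submodule.range_mkQ]
  | add_one o iho =>
    intro hle
    have ho : o < β := lt_of_lt_of_le (Order.lt_succ o) hle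
    rw [Ordinal.add_one_eq_succ, pPow_succ, iho ho.le]
    apply le_antisymm
    · rw [walkerX, Submodule.map_span, Submodule.span_le]
      rintro x ⟨y, ⟨g, hg, rfl⟩, rfl⟩
      have hg' : WP.lastVal β g = o := hg
      have hgnil : g.1 ≠ [] := by
        intro hnil
        have hlb : WP.lastVal β g = β := by
          rcases g with ⟨l, hl⟩
          subst hnil
          rfl
        rw [hg'] at hlb
        exact absurd hlb (ne_of_lt ho)
      have : (LinearMap.lsmul R (WalkerModule R p β) p) (walkerMk R p β g)
          = walkerMk R p β (WP.dropG β g) := by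
        rw [LinearMap.lsmul_apply, smul_mk R p β g hgnil]
      rw [this]
      apply mem_X
      rw [Order.succ_le_iff, ← hg']
      exact WP.lastVal_dropG_gt g hgnil
    · rw [walkerX, Submodule.span_le]
      rintro x ⟨g, hg, rfl⟩
      have hg' : WP.lastVal β g = Order.succ o := hg
      have holt : o < WP.lastVal β g := by rw [hg']; exact Order.lt_succ o
      refine ⟨walkerMk R p β (WP.extG g o holt), ?_, ?_⟩
      · apply Submodule.subset_span
        exact ⟨WP.extG g o holt, WP.lastVal_extG g o holt, rfl⟩
      · rw [LinearMap.lsmul_apply, smul_extG]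
  | limit o holim iho =>
    intro hle
    rw [pPow_limit R p _ o holim]
    have hEq : ∀ ρ : Set.Iio o, pPow R p (WalkerModule R p β) ρ.1 = walkerX R p β ρ.1 :=
      fun ρ => iho ρ.1 ρ.2 (le_of_lt (lt_of_lt_of_le ρ.2 hle))
    rw [iInf_congr hEq]
    apply le_antisymm
    · intro x hx
      rw [Submodule.mem_iInf] at hx
      obtain ⟨f0, rfl⟩ := Submodule.Quotient.mk_surjective _ x
      obtain ⟨f, hredf, hfsp⟩ := exists_red R p β f0
      have hmkeq : (Submodule.Quotient.mk f0 : WalkerModule R p β) = Submodule.Quotient.mk f :=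
        (Submodule.Quotient.eq _).mpr hfsp
      rw [hmkeq]
      have hsupp : ∀ g ∈ f.support, o ≤ WP.lastVal β g := by
        intro g hg
        by_contra hlt
        rw [not_le] at hlt
        have hsucc : Order.succ (WP.lastVal β g) < o := holim.succ_lt hlt
        have hmem := hx ⟨Order.succ (WP.lastVal β g), hsucc⟩
        rw [hmkeq] at hmem
        have := reduced_mem_X R p β hp0 _ f hredf hmem g hg
        exact absurd this (by simp [Order.succ_le_iff])
      rw [X_eq_map]
      exact ⟨f, (Finsupp.mem_supported R f).mpr (fun g hg => hsupp g hg), rfl⟩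
    · apply le_iInf
      intro ρ
      rw [walkerX, Submodule.span_le]
      rintro x ⟨g, hg, rfl⟩
      have hg' : WP.lastVal β g = o := hg
      apply mem_X
      rw [hg']
      exact ρ.2.le

lemma part2 (hp0 : p ≠ 0) :
    pPow R p (WalkerModule R p β) β = Submodule.span R {walkerTop R p β} := by
  rw [part1 R p β hp0 β le_rfl]
  apply le_antisymm
  · rw [walkerX, Submodule.span_le]
    rintro x ⟨g, hg, rfl⟩
    have hnil : g.1 = [] := WP.eq_nil_of_lastVal_eq g hg
    have : g = ⟨[], List.isChain_singleton β⟩ := Subtype.ext hnil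
    rw [this]
    exact Submodule.mem_span_singleton_self _
  · rw [Submodule.span_le, Set.singleton_subset_iff]
    exact mem_X R p β β _ le_rfl

lemma smul_top_zero_iff (hp : Irreducible p) (c : R) :
    c • walkerTop R p β = 0 ↔ p ∣ c := by
  classical
  constructor
  · intro h
    by_contra hnd
    obtain ⟨g0, hg0⟩ : ∃ g0 : WalkerGen β, walkerTop R p β = walkerMk R p β g0 := ⟨_, rfl⟩
    have hsp0 : Finsupp.single g0 c ∈ sp R p β := by
      rw [hg0, walkerMk, ← Submodule.Quotient.mk_smul,
        Submodule.Quotient.mk_eq_zero] at h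
      rwa [Finsupp.smul_single, _root_.smul_eq_mul, mul_one] at h
    rw [show sp R p β = LinearMap.range (Finsupp.linearCombination R (walkerRel R p β)) from
      (Finsupp.range_linearCombination R).symm] at hsp0
    obtain ⟨a, ha⟩ := hsp0
    have hcore := core R p β hp.ne_zero Set.univ
      (fun _ _ _ => Set.mem_univ _) a 0 (fun _ _ => rfl)
      (fun h' _ => by
        rw [zero_add, ha, Finsupp.single_apply]
        split
        · next heq => exact Or.inr (by rwa [])
        · exact Or.inl rfl)
    have := (hcore g0 (Set.mem_univ _)).2
    rw [zero_add, ha, Finsupp.single_apply, if_pos rfl] at this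
    exact hnd (this ▸ dvd_zero p)
  · rintro ⟨d, rfl⟩
    rw [mul_comm, mul_smul, smul_top, smul_zero]

lemma top_ne_zero (hp : Irreducible p) : walkerTop R p β ≠ 0 := by
  intro h
  have : p ∣ (1 : R) := (smul_top_zero_iff R p β hp 1).mp (by rw [one_smul, h])
  exact hp.not_isUnit (isUnit_of_dvd_one this)

lemma pow_smul_mk (n : ℕ) : ∀ g : WalkerGen β, g.1.length = n →
    p ^ (n + 1) • walkerMk R p β g = 0 := by
  induction n with
  | zero =>
    intro g hg
    have hnil : g.1 = [] := List.eq_nil_of_length_eq_zero hg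
    have : g = ⟨[], List.isChain_singleton β⟩ := Subtype.ext hnil
    rw [this, pow_one]
    exact smul_top R p β
  | succ n ih =>
    intro g hg
    have hgnil : g.1 ≠ [] := by
      intro hnil; rw [hnil] at hg; simp at hg
    have hlen : (WP.dropG β g).1.length = n := by
      have := WP.length_dropG g hgnil; omega
    rw [pow_succ, mul_smul, smul_mk R p β g hgnil, ih _ hlen]

lemma part5 (hp : Irreducible p) : Module.IsTorsion R (WalkerModule R p β) := by
  classical
  have key : ∀ f : WalkerGen β →₀ R,
      ∃ n : ℕ, p ^ n • (Submodule.Quotient.mk f : WalkerModule R p β) = 0 := by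
    intro f
    induction f using Finsupp.induction with
    | zero => exact ⟨0, by rw [pow_zero, one_smul, Submodule.Quotient.mk_zero]⟩
    | single_add g b f hgs hb ihf =>
      obtain ⟨n, hn⟩ := ihf
      refine ⟨(g.1.length + 1) + n, ?_⟩
      rw [Submodule.Quotient.mk_add, smul_add]
      have h1 : p ^ (g.1.length + 1 + n) • (Submodule.Quotient.mk (Finsupp.single g b) :
          WalkerModule R p β) = 0 := by
        have hsm : (Submodule.Quotient.mk (Finsupp.single g b) : WalkerModule R p β)
            = b • walkerMk R p β g := by
          rw [walkerMk, ← Submodule.Quotient.mk_smul, Finsupp.smul_single, _root_.smul_eq_mul, mul_one]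
        rw [hsm, smul_comm, add_comm (g.1.length + 1) n, pow_add, mul_smul,
          pow_smul_mk R p β _ g rfl, smul_zero, smul_zero]
      have h2 : p ^ (g.1.length + 1 + n) • (Submodule.Quotient.mk f :
          WalkerModule R p β) = 0 := by
        rw [pow_add, mul_smul, hn, smul_zero]
      rw [h1, h2, add_zero]
  intro x
  obtain ⟨f, rfl⟩ := Submodule.Quotient.mk_surjective _ x
  obtain ⟨n, hn⟩ := key f
  exact ⟨⟨p ^ n, mem_nonZeroDivisors_of_ne_zero (pow_ne_zero n hp.ne_zero)⟩, hn⟩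

end Main

theorem stmt3 (R : Type u) [CommRing R] [IsDomain R] [IsDiscreteValuationRing R]
    (p : R) (hp : Irreducible p) (β : Ordinal.{w}) :
    (∀ α ≤ β, pPow R p (WalkerModule R p β) α = walkerX R p β α) ∧
    pPow R p (WalkerModule R p β) β = Submodule.span R {walkerTop R p β} ∧
    Nonempty ((↥(pPow R p (WalkerModule R p β) β)) ≃ₗ[R] R ⧸ Ideal.span {p}) ∧
    pPow R p (WalkerModule R p β) (β + 1) = ⊥ ∧
    Module.IsTorsion R (WalkerModule R p β) ∧
    (∀ σ < β + 1,
      pPow R p (WalkerModule R p β) (σ + 1) ≠ pPow R p (WalkerModule R p β) σ) := by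
  classical
  have hp0 : p ≠ 0 := hp.ne_zero
  have hbot : pPow R p (WalkerModule R p β) (β + 1) = ⊥ := by
    rw [Ordinal.add_one_eq_succ, pPow_succ, part2 R p β hp0, Submodule.map_span,
      Set.image_singleton]
    have hz : (LinearMap.lsmul R (WalkerModule R p β) p) (walkerTop R p β) = 0 := by
      rw [LinearMap.lsmul_apply, smul_top]
    rw [hz, Submodule.span_zero_singleton]
  refine ⟨part1 R p β hp0, part2 R p β hp0, ?_, hbot, part5 R p β hp, ?_⟩
  · set φ := LinearMap.toSpanSingleton R (WalkerModule R p β) (walkerTop R p β) with hφ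
    have hker : LinearMap.ker φ = Ideal.span {p} := by
      ext c
      rw [LinearMap.mem_ker, hφ, LinearMap.toSpanSingleton_apply, Ideal.mem_span_singleton,
        smul_top_zero_iff R p β hp]
    have hrange : pPow R p (WalkerModule R p β) β = LinearMap.range φ := by
      rw [part2 R p β hp0, hφ, LinearMap.span_singleton_eq_range]
    exact ⟨(LinearEquiv.ofEq _ _ hrange).trans
      (φ.quotKerEquivRange.symm.trans (Submodule.quotEquivOfEq _ _ hker))⟩
  · intro σ hσ
    rw [Ordinal.add_one_eq_succ, Order.lt_succ_iff] at hσ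
    rcases hσ.lt_or_eq with hlt | heqq
    · have h1 : σ + 1 ≤ β := by
        rw [Ordinal.add_one_eq_succ, Order.succ_le_iff]; exact hlt
      rw [part1 R p β hp0 _ h1, part1 R p β hp0 _ hσ]
      intro heq
      have hchain : (β :: [σ]).Chain' (· > ·) :=
        List.isChain_cons_cons.mpr ⟨hlt, List.isChain_singleton σ⟩
      have hlast : WP.lastVal β ⟨[σ], hchain⟩ = σ := by
        show (β :: [σ]).getLast (List.cons_ne_nil _ _) = σ
        rfl
      have hmem : walkerMk R p β ⟨[σ], hchain⟩ ∈ walkerX R p β σ :=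
        mem_X R p β σ ⟨[σ], hchain⟩ hlast.ge
      rw [← heq] at hmem
      have hred : ∀ g ∈ (Finsupp.single (⟨[σ], hchain⟩ : WalkerGen β) (1:R)).support,
          ¬ p ∣ Finsupp.single (⟨[σ], hchain⟩ : WalkerGen β) (1:R) g := by
        intro g hg
        rw [Finsupp.support_single_ne_zero _ one_ne_zero, Finset.mem_singleton] at hg
        subst hg
        rw [Finsupp.single_apply, if_pos rfl]
        exact fun hd => hp.not_isUnit (isUnit_of_dvd_one hd)
      have hcon := reduced_mem_X R p β hp0 (σ+1)
        (Finsupp.single (⟨[σ], hchain⟩ : WalkerGen β) (1:R)) hred hmem ⟨[σ], hchain⟩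
        (Finsupp.mem_support_iff.mpr (ne_of_eq_of_ne Finsupp.single_eq_same one_ne_zero))
      rw [hlast, Ordinal.add_one_eq_succ, Order.succ_le_iff] at hcon
      exact lt_irrefl σ hcon
    · rw [heqq]
      intro heq
      rw [hbot, part2 R p β hp0] at heq
      exact top_ne_zero R p β hp (Submodule.span_singleton_eq_bot.mp heq.symm)
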